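/- Let H₁, H₂, …, Hₘ be pairwise non-isomorphic connected finite simple graphs, each with at least one vertex. If a polynomial p ∈ ℝ[x₁, …, xₘ] satisfies p(i(H₁, G), i(H₂, G), …, i(Hₘ, G)) = 0 for every finite simple graph G, then p is the zero polynomial. Equivalently, the functions G ↦ i(H, G), as H ranges over isomorphism classes of connected graphs, are algebraically independent, so the algebra they generate is a free polynomial algebra on these generators. -/

import Mathlib

open MvPolynomial in
lemma AuxGC.auxPolyZero (m : ℕ) (q : MvPolynomial (Fin m) ℝ)
    (h : ∀ k : Fin m → ℕ, eval (fun i => (k i : ℝ)) q = 0) : q = 0 := by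
  induction m with
  | zero =>
    obtain ⟨a, rfl⟩ := MvPolynomial.C_surjective (Fin 0) q
    have := h (fun i => 0)
    simpa using this
  | succ m ih =>
    set Q := finSuccEquiv ℝ m q with hQ
    have hcoeff : ∀ nn, Q.coeff nn = 0 := by
      intro nn
      apply ih
      intro x
      have hP : (Q.map (eval (fun i => (x i : ℝ)))) = 0 := by
        apply Polynomial.eq_zero_of_infinite_isRoot
        apply Set.Infinite.mono (s := Set.range (Nat.cast : ℕ → ℝ))
        · rintro _ ⟨a, rfl⟩
          have h1 := h (Fin.cons a x)
          have h2 : (fun i => ((Fin.cons a x : Fin (m+1) → ℕ) i : ℝ)) =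
              Fin.cons (a : ℝ) (fun i => (x i : ℝ)) := by
            ext i
            refine Fin.cases ?_ ?_ i <;> simp
          rw [h2, eval_eq_eval_mv_eval'] at h1
          exact h1
        · exact Set.infinite_range_of_injective Nat.cast_injective
      have := congrArg (fun P => Polynomial.coeff P nn) hP
      simpa [Polynomial.coeff_map] using this
    have : Q = 0 := Polynomial.ext fun nn => by simp [hcoeff nn]
    have := congrArg (finSuccEquiv ℝ m).symm this
    simpa [hQ] using this

open MvPolynomial in
lemma AuxGC.evalBind (m : ℕ) (f : Fin m → ℝ) (g : Fin m → MvPolynomial (Fin m) ℝ)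
    (φ : MvPolynomial (Fin m) ℝ) :
    eval f (bind₁ g φ) = eval (fun i => eval f (g i)) φ := by
  have h : ∀ (v : Fin m → ℝ), ⇑(eval v) = ⇑(aeval (R := ℝ) v) := fun v => by
    rw [← coe_aeval_eq_eval]; rfl
  rw [h, h, aeval_bind₁]


noncomputable def graphCount {α β : Type*} [Fintype β]
    (H : SimpleGraph α) (G : SimpleGraph β) : ℕ :=
  Nat.card {S : Finset β // Nonempty (G.induce (S : Set β) ≃g H)}

namespace AuxGC

variable {m : ℕ} {n : Fin m → ℕ}

abbrev GV (n k : Fin m → ℕ) : Type := Σ i : Fin m, Fin (k i) × Fin (n i)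

def GG (Hs : (i : Fin m) → SimpleGraph (Fin (n i))) (k : Fin m → ℕ) : SimpleGraph (GV n k) where
  Adj x y := ∃ (i : Fin m) (c : Fin (k i)) (a b : Fin (n i)),
      (Hs i).Adj a b ∧ x = ⟨i, (c, a)⟩ ∧ y = ⟨i, (c, b)⟩
  symm := by constructor; rintro x y ⟨i, c, a, b, hab, rfl, rfl⟩; exact ⟨i, c, b, a, hab.symm, rfl, rfl⟩
  loopless := by
    constructor
    rintro x ⟨i, c, a, b, hab, rfl, h⟩
    simp only [Sigma.mk.inj_iff, heq_eq_eq, Prod.mk.injEq, true_and] at h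
    exact hab.ne h

/-- the fiber embedding -/
def femb (k : Fin m → ℕ) (i : Fin m) (c : Fin (k i)) : Fin (n i) ↪ GV n k where
  toFun a := ⟨i, (c, a)⟩
  inj' a b h := by simpa using h

lemma GG_adj_femb {Hs : (i : Fin m) → SimpleGraph (Fin (n i))} {k : Fin m → ℕ}
    {i : Fin m} {c : Fin (k i)} {a b : Fin (n i)} :
    (GG Hs k).Adj (femb k i c a) (femb k i c b) ↔ (Hs i).Adj a b := by
  constructor
  · rintro ⟨i', c', a', b', hab, h1, h2⟩
    simp only [femb, Function.Embedding.coeFn_mk, Sigma.mk.inj_iff, heq_eq_eq,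
      Prod.mk.injEq] at h1 h2
    obtain ⟨rfl, rfl, rfl⟩ := h1
    obtain ⟨-, -, rfl⟩ := h2
    exact hab
  · intro hab
    exact ⟨i, c, a, b, hab, rfl, rfl⟩

/-- an embedding of graphs induces an iso on induced subgraphs -/
noncomputable def induceMapIso {γ β : Type*} {G' : SimpleGraph γ} {G : SimpleGraph β}
    (f : γ ↪ β) (hf : ∀ a b, G.Adj (f a) (f b) ↔ G'.Adj a b) (T : Finset γ) :
    G'.induce (T : Set γ) ≃g G.induce ((T.map f : Finset β) : Set β) := by
  refine ⟨Equiv.ofBijective (fun x => ⟨f x.1, by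
      simp only [Finset.coe_map, Set.mem_image, Finset.mem_coe]
      exact ⟨x.1, x.2, rfl⟩⟩) ⟨?_, ?_⟩, ?_⟩
  · intro a b h
    exact Subtype.ext (f.injective (congrArg Subtype.val h))
  · rintro ⟨y, hy⟩
    simp only [Finset.coe_map, Set.mem_image, Finset.mem_coe] at hy
    obtain ⟨a, ha, rfl⟩ := hy
    exact ⟨⟨a, ha⟩, rfl⟩
  · intro a b
    simpa [SimpleGraph.comap_adj] using hf a.1 b.1

def tag {k : Fin m → ℕ} (x : GV n k) : Σ i : Fin m, Fin (k i) := ⟨x.1, x.2.1⟩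

lemma tag_const {Hs : (i : Fin m) → SimpleGraph (Fin (n i))} {k : Fin m → ℕ} {j : Fin m}
    {S : Finset (GV n k)} (e : (GG Hs k).induce (S : Set (GV n k)) ≃g Hs j)
    (hc : (Hs j).Connected) (x y : (S : Set (GV n k))) :
    tag x.1 = tag y.1 := by
  have pre : ((GG Hs k).induce (S : Set (GV n k))).Preconnected :=
    (SimpleGraph.Iso.preconnected_iff e).mpr hc.preconnected
  obtain ⟨w⟩ := pre x y
  induction w with
  | nil => rfl
  | cons h p ih =>
    refine Eq.trans ?_ ih
    rw [SimpleGraph.comap_adj] at h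
    obtain ⟨i, c, a, b, hab, h1, h2⟩ := h
    simp only [Function.Embedding.coe_subtype] at h1 h2
    calc tag _ = tag (⟨i, (c, a)⟩ : GV n k) := by rw [h1]
    _ = tag (⟨i, (c, b)⟩ : GV n k) := rfl
    _ = _ := by rw [h2]


lemma count_GG (Hs : (i : Fin m) → SimpleGraph (Fin (n i)))
    (hconn : ∀ i, (Hs i).Connected) (hpos : ∀ i, 1 ≤ n i) (k : Fin m → ℕ) (j : Fin m) :
    graphCount (Hs j) (GG Hs k) = ∑ i, k i * graphCount (Hs j) (Hs i) := by
  classical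
  let v0 : Fin (n j) := ⟨0, hpos j⟩
  let A := Σ i : Fin m, Fin (k i) ×
    {T : Finset (Fin (n i)) // Nonempty ((Hs i).induce (T : Set (Fin (n i))) ≃g Hs j)}
  let F : A → {S : Finset (GV n k) //
      Nonempty ((GG Hs k).induce (S : Set (GV n k)) ≃g Hs j)} :=
    fun z => ⟨z.2.2.1.map (femb k z.1 z.2.1),
      z.2.2.2.elim fun e =>
        ⟨((induceMapIso (femb k z.1 z.2.1) (fun _ _ => GG_adj_femb) z.2.2.1).symm).trans e⟩⟩
  have hFbij : Function.Bijective F := by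
    constructor
    · rintro ⟨i, c, T, hT⟩ ⟨i', c', T', hT'⟩ h
      have hmap : T.map (femb k i c) = T'.map (femb k i' c') := congrArg Subtype.val h
      obtain ⟨e⟩ := hT
      have ha0 : (e.symm v0).1 ∈ T := (e.symm v0).2
      have hmem : femb k i c (e.symm v0).1 ∈ T'.map (femb k i' c') :=
        hmap ▸ Finset.mem_map_of_mem _ ha0
      rw [Finset.mem_map] at hmem
      obtain ⟨a', _, hEq⟩ := hmem
      simp only [femb, Function.Embedding.coeFn_mk, Sigma.mk.inj_iff] at hEq
      obtain ⟨rfl, hEq2⟩ := hEq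
      have hTT : T = T' := Finset.map_injective _ hmap
      subst hTT
      rfl
    · rintro ⟨S, hS⟩
      obtain ⟨e⟩ := hS
      have htag : ∀ z ∈ S, tag z = tag (e.symm v0).1 := fun z hz =>
        tag_const e (hconn j) ⟨z, hz⟩ (e.symm v0)
      set t0 := tag (e.symm v0).1 with ht0
      clear_value t0
      obtain ⟨i, c⟩ := t0
      let T : Finset (Fin (n i)) := Finset.univ.filter (fun a => (⟨i, (c, a)⟩ : GV n k) ∈ S)
      have hTS : T.map (femb k i c) = S := by
        ext z
        simp only [T, Finset.mem_map, Finset.mem_filter, Finset.mem_univ, true_and, femb,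
          Function.Embedding.coeFn_mk]
        constructor
        · rintro ⟨a, haz, rfl⟩; exact haz
        · intro hz
          have h := htag z hz
          obtain ⟨iz, cz, az⟩ := z
          have hi : iz = i := congrArg Sigma.fst h
          subst hi
          have hc : cz = c := by simpa [tag, Sigma.mk.inj_iff] using h
          subst hc
          exact ⟨az, hz, rfl⟩
      have hT : Nonempty ((Hs i).induce (T : Set (Fin (n i))) ≃g Hs j) := by
        have e' : (GG Hs k).induce ((T.map (femb k i c) : Finset (GV n k)) : Set (GV n k))
            ≃g Hs j := by rw [hTS]; exact e
        exact ⟨(induceMapIso (femb k i c) (fun _ _ => GG_adj_femb) T).trans e'⟩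
      exact ⟨⟨i, c, T, hT⟩, Subtype.ext hTS⟩
  haveI : ∀ i : Fin m, Fintype
      {T : Finset (Fin (n i)) // Nonempty ((Hs i).induce (T : Set (Fin (n i))) ≃g Hs j)} :=
    fun i => Fintype.ofFinite _
  have h1 : graphCount (Hs j) (GG Hs k) = Nat.card A :=
    (Nat.card_eq_of_bijective F hFbij).symm
  rw [h1, Nat.card_eq_fintype_card, Fintype.card_sigma]
  refine Finset.sum_congr rfl fun i _ => ?_
  rw [Fintype.card_prod, Fintype.card_fin, graphCount, Nat.card_eq_fintype_card]

lemma card_of_iso {Hs : (i : Fin m) → SimpleGraph (Fin (n i))} {i j : Fin m}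
    {T : Finset (Fin (n i))}
    (e : (Hs i).induce (T : Set (Fin (n i))) ≃g Hs j) : T.card = n j := by
  have := Nat.card_congr e.toEquiv
  simpa [Nat.card_coe_set_eq, Set.ncard_coe_finset, Nat.card_eq_fintype_card] using this

lemma cnt_zero_lt (Hs : (i : Fin m) → SimpleGraph (Fin (n i))) {i j : Fin m}
    (h : n i < n j) : graphCount (Hs j) (Hs i) = 0 := by
  rw [graphCount, Nat.card_eq_zero]
  left
  constructor
  rintro ⟨T, ⟨e⟩⟩
  have h1 := card_of_iso e
  have h2 : T.card ≤ n i := by simpa using Finset.card_le_univ T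
  omega

lemma cnt_zero_ne (Hs : (i : Fin m) → SimpleGraph (Fin (n i))) {i j : Fin m}
    (hij : IsEmpty (Hs i ≃g Hs j)) (hn : n i = n j) : graphCount (Hs j) (Hs i) = 0 := by
  rw [graphCount, Nat.card_eq_zero]
  left
  constructor
  rintro ⟨T, ⟨e⟩⟩
  have h1 := card_of_iso e
  have hT : T = Finset.univ := Finset.eq_univ_of_card _ (by simp [h1, hn])
  subst hT
  rw [Finset.coe_univ] at e
  exact hij.false ((SimpleGraph.induceUnivIso (Hs i)).symm.trans e)

lemma cnt_pos (Hs : (i : Fin m) → SimpleGraph (Fin (n i))) (i : Fin m) :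
    0 < graphCount (Hs i) (Hs i) := by
  rw [graphCount]
  have : Nonempty {S : Finset (Fin (n i)) //
      Nonempty ((Hs i).induce (S : Set (Fin (n i))) ≃g Hs i)} :=
    ⟨⟨Finset.univ, by rw [Finset.coe_univ]; exact ⟨SimpleGraph.induceUnivIso (Hs i)⟩⟩⟩
  exact Nat.card_pos

lemma det_ne (Hs : (i : Fin m) → SimpleGraph (Fin (n i)))
    (hnoniso : ∀ i j, i ≠ j → IsEmpty (Hs i ≃g Hs j)) :
    (Matrix.of fun j i : Fin m => (graphCount (Hs j) (Hs i) : ℝ)).det ≠ 0 := by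
  classical
  set C := Matrix.of fun j i : Fin m => (graphCount (Hs j) (Hs i) : ℝ) with hC
  have hBT : C.BlockTriangular n := by
    intro j i h
    simp [hC, cnt_zero_lt Hs h]
  rw [hBT.det]
  rw [Finset.prod_ne_zero_iff]
  intro a _
  have hdiag : C.toSquareBlock n a = Matrix.diagonal (fun j => C j.1 j.1) := by
    ext j i
    rcases eq_or_ne j i with rfl | hji
    · simp [Matrix.toSquareBlock_def]
    · rw [Matrix.diagonal_apply_ne _ hji]
      have hne : (i : Fin m) ≠ (j : Fin m) := fun hh => hji (Subtype.ext hh.symm)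
      have hn' : n (i : Fin m) = n (j : Fin m) := by rw [i.2, j.2]
      have := cnt_zero_ne Hs (hnoniso _ _ hne) hn'
      simp [Matrix.toSquareBlock_def, hC, this]
  rw [hdiag, Matrix.det_diagonal]
  rw [Finset.prod_ne_zero_iff]
  intro j _
  have := cnt_pos Hs (j : Fin m)
  simp [hC]
  omega

end AuxGC


open MvPolynomial AuxGC

/-- Let `H₁, …, Hₘ` be pairwise non-isomorphic connected finite simple graphs, each with at
least one vertex. If a polynomial `p ∈ ℝ[x₁, …, xₘ]` satisfies
`p(i(H₁, G), …, i(Hₘ, G)) = 0` for every finite simple graph `G`, then `p = 0`; i.e. the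
induced-subgraph counts of connected graphs are algebraically independent. -/
theorem connected_graphCounts_algebraically_independent
    (m : ℕ) (n : Fin m → ℕ) (Hs : (i : Fin m) → SimpleGraph (Fin (n i)))
    (hconn : ∀ i, (Hs i).Connected)
    (hpos : ∀ i, 1 ≤ n i)
    (hnoniso : ∀ i j, i ≠ j → IsEmpty (Hs i ≃g Hs j))
    (p : MvPolynomial (Fin m) ℝ)
    (hp : ∀ (β : Type) [Fintype β] (G : SimpleGraph β),
      MvPolynomial.eval (fun i => (graphCount (Hs i) G : ℝ)) p = 0) :
    p = 0 := by
  classical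
  set Cm : Matrix (Fin m) (Fin m) ℝ :=
    Matrix.of fun j i => (graphCount (Hs j) (Hs i) : ℝ) with hCm
  have hdet : IsUnit Cm.det := isUnit_iff_ne_zero.mpr (AuxGC.det_ne Hs hnoniso)
  set Dm := Cm⁻¹ with hDm
  have hCD : Cm * Dm = 1 := Matrix.mul_nonsing_inv _ hdet
  set L : Fin m → MvPolynomial (Fin m) ℝ :=
    fun j => ∑ i, MvPolynomial.C (Cm j i) * X i with hL
  set L' : Fin m → MvPolynomial (Fin m) ℝ :=
    fun j => ∑ i, MvPolynomial.C (Dm j i) * X i with hL'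
  have hq0 : bind₁ L p = 0 := by
    apply auxPolyZero
    intro kk
    rw [evalBind]
    have he : (fun j => eval (fun i => ((kk i : ℝ))) (L j)) =
        fun j => (graphCount (Hs j) (GG Hs kk) : ℝ) := by
      funext j
      rw [count_GG Hs hconn hpos kk j]
      push_cast
      simp only [hL, map_sum, eval_mul, eval_C, eval_X]
      exact Finset.sum_congr rfl fun i _ => by rw [hCm, Matrix.of_apply]; ring
    rw [he]
    exact hp (GV n kk) (GG Hs kk)
  have hLL : ∀ j, bind₁ L' (L j) = X j := by
    intro j
    rw [hL]
    simp only [map_sum, map_mul, bind₁_X_right, hL', algHom_C, algebraMap_eq]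
    have h1 : ∀ i : Fin m, (MvPolynomial.C (Cm j i) : MvPolynomial (Fin m) ℝ) *
        ∑ l, MvPolynomial.C (Dm i l) * X l
        = ∑ l, MvPolynomial.C (Cm j i * Dm i l) * X l := by
      intro i
      rw [Finset.mul_sum]
      exact Finset.sum_congr rfl fun l _ => by rw [← mul_assoc, ← MvPolynomial.C_mul]
    rw [Finset.sum_congr rfl fun i _ => h1 i]
    rw [Finset.sum_comm]
    have h2 : ∀ l : Fin m, (∑ i, MvPolynomial.C (Cm j i * Dm i l) * X l
        : MvPolynomial (Fin m) ℝ)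
        = MvPolynomial.C ((1 : Matrix (Fin m) (Fin m) ℝ) j l) * X l := by
      intro l
      rw [← Finset.sum_mul, ← map_sum, ← Matrix.mul_apply, hCD]
    rw [Finset.sum_congr rfl fun l _ => h2 l]
    simp [Matrix.one_apply, apply_ite (MvPolynomial.C (σ := Fin m) (R := ℝ)), ite_mul,
      Finset.sum_ite_eq]
  have hfinal : bind₁ L' (bind₁ L p) = p := by
    rw [bind₁_bind₁]
    have hX : (fun i => bind₁ L' (L i)) = (X : Fin m → MvPolynomial (Fin m) ℝ) :=
      funext hLL
    rw [hX, bind₁_X_left]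
    rfl
  rw [hq0, map_zero] at hfinal
  exact hfinal.symm
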